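/- arXiv:2209.11170 — 3 statements merged into one kernel-verified Lean document; each statement's English description precedes it below -/
import Mathlib

section
/- Let S ∈ ℂ^{M×M} be Hermitian positive definite, Hₐ ∈ ℂ^{P×M}, W ∈ ℂ^{P×K}, and let β > 0 be a real scalar. Assume G := W* Hₐ S⁻¹ Hₐ* W ∈ ℂ^{K×K} is invertible. Define F₀ := β · S⁻¹ Hₐ* W G⁻¹ ∈ ℂ^{M×K}. Then for every F ∈ ℂ^{M×K} satisfying the constraint W* Hₐ F = β · I_K, one has Re Tr(F₀* S F₀) ≤ Re Tr(F* S F); i.e., F₀ is a global minimizer of Tr(F* S F) subject to W* Hₐ F = β I_K. -/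
open Matrix
open scoped ComplexOrder

lemma psd_diag_nonneg {n : ℕ} {A : Matrix (Fin n) (Fin n) ℂ} (hA : A.PosSemidef)
    (i : Fin n) : 0 ≤ A i i := by
  exact hA.diag_nonneg

lemma psd_trace_re_nonneg {n : ℕ} {A : Matrix (Fin n) (Fin n) ℂ} (hA : A.PosSemidef) :
    0 ≤ (Matrix.trace A).re := by
  rw [Matrix.trace]
  rw [Complex.re_sum]
  refine Finset.sum_nonneg fun i _ => ?_
  have := psd_diag_nonneg hA i
  rw [Complex.le_def] at this
  simpa using this.1

/-- The analog precoder `F₀ = β S⁻¹ Hₐᴴ W (Wᴴ Hₐ S⁻¹ Hₐᴴ W)⁻¹` is a global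
minimizer of the self-interference-plus-noise power `Tr(Fᴴ S F)` subject to the
distortionless constraint `Wᴴ Hₐ F = β I`. -/
theorem optimal_analog_precoder {M P K : ℕ}
    (S : Matrix (Fin M) (Fin M) ℂ) (hS : S.PosDef)
    (Ha : Matrix (Fin P) (Fin M) ℂ) (W : Matrix (Fin P) (Fin K) ℂ)
    (β : ℝ) (hβ : 0 < β)
    (hG : IsUnit (Wᴴ * Ha * S⁻¹ * Haᴴ * W))
    (F₀ : Matrix (Fin M) (Fin K) ℂ)
    (hF₀ : F₀ = (β : ℂ) • (S⁻¹ * Haᴴ * W * (Wᴴ * Ha * S⁻¹ * Haᴴ * W)⁻¹)) :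
    ∀ F : Matrix (Fin M) (Fin K) ℂ,
      Wᴴ * Ha * F = (β : ℂ) • (1 : Matrix (Fin K) (Fin K) ℂ) →
      (Matrix.trace (F₀ᴴ * S * F₀)).re ≤ (Matrix.trace (Fᴴ * S * F)).re := by
  intro F hF
  set G := Wᴴ * Ha * S⁻¹ * Haᴴ * W with hGdef
  have hSinv : S⁻¹ * S = 1 := Matrix.nonsing_inv_mul S ((Matrix.isUnit_iff_isUnit_det S).mp hS.isUnit)
  have hGu : G * G⁻¹ = 1 := Matrix.mul_nonsing_inv G ((Matrix.isUnit_iff_isUnit_det G).mp hG)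
  have hSinvH : S⁻¹ᴴ = S⁻¹ := (hS.isHermitian.inv).eq
  -- conjugate transpose of F₀
  have hF₀H : F₀ᴴ = (β : ℂ) • ((G⁻¹)ᴴ * Wᴴ * Ha * S⁻¹) := by
    rw [hF₀]
    simp only [conjTranspose_smul, conjTranspose_mul, hSinvH, conjTranspose_conjTranspose]
    rw [Complex.star_def, Complex.conj_ofReal]
    simp [Matrix.mul_assoc]
  -- key: F₀ᴴ * S * X = β • (G⁻¹ᴴ * (Wᴴ * Ha * X))
  have key : ∀ X : Matrix (Fin M) (Fin K) ℂ,
      F₀ᴴ * S * X = (β : ℂ) • ((G⁻¹)ᴴ * (Wᴴ * Ha * X)) := by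
    intro X
    rw [hF₀H]
    rw [Matrix.smul_mul, Matrix.smul_mul]
    congr 1
    calc (G⁻¹)ᴴ * Wᴴ * Ha * S⁻¹ * S * X
        = (G⁻¹)ᴴ * Wᴴ * Ha * (S⁻¹ * S) * X := by simp only [Matrix.mul_assoc]
      _ = (G⁻¹)ᴴ * (Wᴴ * Ha * X) := by rw [hSinv, Matrix.mul_one]; simp only [Matrix.mul_assoc]
  have hWHaF₀ : Wᴴ * Ha * F₀ = (β : ℂ) • (1 : Matrix (Fin K) (Fin K) ℂ) := by
    rw [hF₀, Matrix.mul_smul]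
    congr 1
    calc Wᴴ * Ha * (S⁻¹ * Haᴴ * W * G⁻¹) = G * G⁻¹ := by
          rw [hGdef]; simp only [Matrix.mul_assoc]
      _ = 1 := hGu
  have h1 : F₀ᴴ * S * F = F₀ᴴ * S * F₀ := by rw [key F, key F₀, hF, hWHaF₀]
  set D := F - F₀ with hD
  have hcross : F₀ᴴ * S * D = 0 := by
    rw [hD, Matrix.mul_sub, h1, sub_self]
  have hcross' : Dᴴ * S * F₀ = 0 := by
    have := congrArg conjTranspose hcross
    simpa [conjTranspose_mul, hS.isHermitian.eq, Matrix.mul_assoc] using this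
  have hsplit : Fᴴ * S * F = F₀ᴴ * S * F₀ + Dᴴ * S * D := by
    have hDF : F = F₀ + D := by rw [hD]; abel
    calc Fᴴ * S * F = (F₀ + D)ᴴ * S * (F₀ + D) := by rw [← hDF]
      _ = F₀ᴴ * S * F₀ + F₀ᴴ * S * D + (Dᴴ * S * F₀ + Dᴴ * S * D) := by
          simp only [conjTranspose_add, Matrix.add_mul, Matrix.mul_add]; abel
      _ = F₀ᴴ * S * F₀ + Dᴴ * S * D := by rw [hcross, hcross']; simp
  have hpsd : (Dᴴ * S * D).PosSemidef := hS.posSemidef.conjTranspose_mul_mul_same D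
  have := psd_trace_re_nonneg hpsd
  rw [hsplit, Matrix.trace_add, Complex.add_re]
  linarith
end

section
/- Let U ∈ ℂ^{M×L} with U* U = I_L, let A ∈ ℂ^{M×N} with N ≤ L satisfy U U* A = A (the columns of A lie in the column space of U), and let ρ ≥ 0 be real. Then there exists Q ∈ ℂ^{L×N} with Q* Q = I_N such that det(I_N + ρ · Q* U* A A* U Q) = det(I_N + ρ · A* A); i.e., the upper bound det(I_N + ρ A* A) of Theorem 2 holds with equality for some semi-unitary digital stage Q whenever the range of A is contained in the range of the semi-unitary U. -/
open Matrix

set_option maxHeartbeats 1000000 in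
/-- Any `L × N` matrix with `N ≤ L` is fixed by the projection `Q Qᴴ` for some
semi-unitary `Q`. -/
theorem aux_semiunitary_proj {L N : ℕ} (hNL : N ≤ L) (B : Matrix (Fin L) (Fin N) ℂ) :
    ∃ Q : Matrix (Fin L) (Fin N) ℂ, Qᴴ * Q = 1 ∧ Q * (Qᴴ * B) = B := by
  classical
  let c : Fin N → EuclideanSpace ℂ (Fin L) := fun k => WithLp.toLp 2 (fun l => B l k)
  let W : Submodule ℂ (EuclideanSpace ℂ (Fin L)) := Submodule.span ℂ (Set.range c)
  let r : ℕ := Module.finrank ℂ W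
  have hrN : r ≤ N := by
    simpa [Set.finrank] using finrank_range_le_card (R := ℂ) c
  have hrL : r ≤ L := hrN.trans hNL
  let w : OrthonormalBasis (Fin r) ℂ W := stdOrthonormalBasis ℂ W
  have hWspan : Submodule.span ℂ
      (Set.range fun j : Fin r => ((w j : W) : EuclideanSpace ℂ (Fin L))) = W := by
    have h1 : Submodule.span ℂ (Set.range (w.toBasis)) = (⊤ : Submodule ℂ W) := w.toBasis.span_eq
    have h2 : Submodule.map W.subtype (Submodule.span ℂ (Set.range (w.toBasis))) = W := by
      rw [h1, Submodule.map_subtype_top]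
    rw [Submodule.map_span] at h2
    have h3 : (⇑W.subtype '' Set.range ⇑w.toBasis) =
        Set.range fun j : Fin r => ((w j : W) : EuclideanSpace ℂ (Fin L)) := by
      rw [← Set.range_comp]
      ext y
      simp [Function.comp]
    rw [← h3]
    exact h2
  let s : Set (Fin L) := {i : Fin L | (i : ℕ) < r}
  let v : Fin L → EuclideanSpace ℂ (Fin L) :=
    fun i => if h : (i : ℕ) < r then ((w ⟨(i : ℕ), h⟩ : W) : EuclideanSpace ℂ (Fin L)) else 0
  have hv : Orthonormal ℂ (s.restrict v) := by
    rw [orthonormal_iff_ite]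
    rintro ⟨i, hi⟩ ⟨j, hj⟩
    have hi' : (i : ℕ) < r := hi
    have hj' : (j : ℕ) < r := hj
    have hvi : s.restrict v ⟨i, hi⟩ = ((w ⟨(i : ℕ), hi'⟩ : W) : EuclideanSpace ℂ (Fin L)) := by
      simp only [Set.restrict_apply, v, dif_pos hi']
      exact dif_pos hi'
    have hvj : s.restrict v ⟨j, hj⟩ = ((w ⟨(j : ℕ), hj'⟩ : W) : EuclideanSpace ℂ (Fin L)) := by
      simp only [Set.restrict_apply, v, dif_pos hj']
      exact dif_pos hj'
    rw [hvi, hvj, ← Submodule.coe_inner, orthonormal_iff_ite.mp w.orthonormal]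
    simp only [Fin.mk.injEq, Subtype.mk.injEq, Fin.val_inj]
  have hcard : Module.finrank ℂ (EuclideanSpace ℂ (Fin L)) = Fintype.card (Fin L) := by simp
  obtain ⟨b, hb⟩ := hv.exists_orthonormalBasis_extension_of_card_eq hcard
  have hbw : ∀ j : Fin r,
      b (Fin.castLE hrL j) = ((w j : W) : EuclideanSpace ℂ (Fin L)) := by
    intro j
    have hmem : Fin.castLE hrL j ∈ s := j.isLt
    rw [hb _ hmem]
    simp only [v]
    rw [dif_pos (show ((Fin.castLE hrL j : Fin L) : ℕ) < r from j.isLt)]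
    congr 1
  refine ⟨Matrix.of fun i j => b (Fin.castLE hNL j) i, ?_, ?_⟩
  · ext j k
    have hbo := orthonormal_iff_ite.mp b.orthonormal (Fin.castLE hNL j) (Fin.castLE hNL k)
    rw [PiLp.inner_apply] at hbo
    simp only [RCLike.inner_apply'] at hbo
    simp only [Matrix.mul_apply, conjTranspose_apply, Matrix.one_apply, RCLike.star_def, Matrix.of_apply]
    rw [hbo]
    by_cases h : j = k
    · subst h; simp
    · rw [if_neg (by simpa [Fin.castLE_inj] using h), if_neg h]
  · ext i k
    have hck : c k ∈ W := Submodule.subset_span ⟨k, rfl⟩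
    have hcoef : ∀ i' : Fin L, r ≤ (i' : ℕ) → (inner ℂ (b i') (c k) : ℂ) = 0 := by
      intro i' hi'
      have hgen : ∀ y ∈ Set.range fun j : Fin r => ((w j : W) : EuclideanSpace ℂ (Fin L)),
          (inner ℂ (b i') y : ℂ) = 0 := by
        rintro y ⟨j, rfl⟩
        show (inner ℂ (b i') ((w j : W) : EuclideanSpace ℂ (Fin L)) : ℂ) = 0
        rw [← hbw j]
        have hne : i' ≠ Fin.castLE hrL j := by
          intro hc
          rw [hc] at hi'
          exact absurd j.isLt (not_lt.mpr hi')
        have := orthonormal_iff_ite.mp b.orthonormal i' (Fin.castLE hrL j)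
        rw [if_neg hne] at this
        simpa using this
      have hx : c k ∈ Submodule.span ℂ
          (Set.range fun j : Fin r => ((w j : W) : EuclideanSpace ℂ (Fin L))) := by
        rw [hWspan]; exact hck
      exact Submodule.span_induction (p := fun y _ => (inner ℂ (b i') y : ℂ) = 0)
        (fun y hy => hgen y hy) (by show (inner ℂ (b i') (0 : EuclideanSpace ℂ (Fin L)) : ℂ) = 0; simp)
        (fun y z _ _ hy hz => by
          show (inner ℂ (b i') (y + z) : ℂ) = 0
          rw [inner_add_right]
          rw [show (inner ℂ (b i') y : ℂ) = 0 from hy, show (inner ℂ (b i') z : ℂ) = 0 from hz, add_zero])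
        (fun a y _ hy => by
          show (inner ℂ (b i') (a • y) : ℂ) = 0
          rw [inner_smul_right, show (inner ℂ (b i') y : ℂ) = 0 from hy, mul_zero]) hx
    have hsum := b.sum_repr (c k)
    have hsum' : ∑ i' : Fin L, b.repr (c k) i' * b i' i = c k i := by
      have h0 : (∑ i' : Fin L, b.repr (c k) i' • b i') i = ∑ i' : Fin L, b.repr (c k) i' * b i' i :=
        by rw [WithLp.ofLp_sum, Finset.sum_apply]; rfl
      rw [← h0, hsum]
    have hvanish : ∀ i' : Fin L, r ≤ (i' : ℕ) → b.repr (c k) i' = 0 := by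
      intro i' hi'
      rw [b.repr_apply_apply]
      exact hcoef i' hi'
    have key : ∑ j : Fin N, b.repr (c k) (Fin.castLE hNL j) * b (Fin.castLE hNL j) i
        = ∑ i' : Fin L, b.repr (c k) i' * b i' i := by
      have hm := Finset.sum_map Finset.univ (Fin.castLEEmb hNL)
        (fun i' => b.repr (c k) i' * b i' i)
      simp only [Fin.coe_castLEEmb] at hm
      rw [← hm]
      refine Finset.sum_subset (Finset.subset_univ _) ?_
      intro i' _ hi'
      have hnot : ¬ ((i' : ℕ) < N) := by
        intro hlt
        exact hi' (Finset.mem_map.mpr ⟨⟨(i' : ℕ), hlt⟩, Finset.mem_univ _, by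
          simp [Fin.castLEEmb, Fin.castLE]⟩)
      rw [hvanish i' (hrN.trans (not_lt.mp hnot)), zero_mul]
    have hQB : ∀ j : Fin N,
        (∑ l, star (b (Fin.castLE hNL j) l) * B l k) = b.repr (c k) (Fin.castLE hNL j) := by
      intro j
      rw [b.repr_apply_apply, PiLp.inner_apply]
      simp only [RCLike.star_def, RCLike.inner_apply']
      rfl
    calc (∑ j : Fin N, b (Fin.castLE hNL j) i * ∑ l, star (b (Fin.castLE hNL j) l) * B l k)
        = ∑ j : Fin N, b.repr (c k) (Fin.castLE hNL j) * b (Fin.castLE hNL j) i := by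
          exact Finset.sum_congr rfl fun j _ => by rw [hQB j, mul_comm]
      _ = c k i := by rw [key, hsum']
      _ = B i k := rfl

/-- **equality condition in Theorem 2.** If the columns of `A` lie in the
column space of the semi-unitary `U` (i.e. `U Uᴴ A = A`) and `N ≤ L`, then there is a
semi-unitary digital stage `Q` with `det(I + ρ Qᴴ Uᴴ A Aᴴ U Q) = det(I + ρ Aᴴ A)`. -/
theorem det_bound_equality_in_range {M L N : ℕ} (hNL : N ≤ L)
    (U : Matrix (Fin M) (Fin L) ℂ) (hU : Uᴴ * U = 1)
    (A : Matrix (Fin M) (Fin N) ℂ) (hA : U * Uᴴ * A = A)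
    (ρ : ℝ) (hρ : 0 ≤ ρ) :
    ∃ Q : Matrix (Fin L) (Fin N) ℂ, Qᴴ * Q = 1 ∧
      Matrix.det (1 + (ρ : ℂ) • (Qᴴ * Uᴴ * A * Aᴴ * U * Q)) =
        Matrix.det (1 + (ρ : ℂ) • (Aᴴ * A)) := by
  obtain ⟨Q, hQQ, hP⟩ := aux_semiunitary_proj hNL (Uᴴ * A)
  refine ⟨Q, hQQ, ?_⟩
  set B : Matrix (Fin L) (Fin N) ℂ := Uᴴ * A with hBdef
  have h1 : Qᴴ * Uᴴ * A * Aᴴ * U * Q = Qᴴ * B * (Bᴴ * Q) := by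
    rw [hBdef, conjTranspose_mul, conjTranspose_conjTranspose]
    simp only [Matrix.mul_assoc]
  have hBB : Bᴴ * B = Aᴴ * A := by
    rw [hBdef, conjTranspose_mul, conjTranspose_conjTranspose, Matrix.mul_assoc,
      ← Matrix.mul_assoc U Uᴴ A, hA]
  rw [h1]
  have h2 : (ρ : ℂ) • ((Qᴴ * B) * (Bᴴ * Q)) = ((ρ : ℂ) • (Qᴴ * B)) * (Bᴴ * Q) := by
    rw [Matrix.smul_mul]
  rw [show Qᴴ * B * (Bᴴ * Q) = (Qᴴ * B) * (Bᴴ * Q) from rfl, h2, det_one_add_mul_comm]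
  have h3 : (Bᴴ * Q) * ((ρ : ℂ) • (Qᴴ * B)) = (ρ : ℂ) • (Aᴴ * A) := by
    rw [Matrix.mul_smul, ← hBB]
    congr 1
    rw [← Matrix.mul_assoc, Matrix.mul_assoc Bᴴ Q Qᴴ, Matrix.mul_assoc Bᴴ (Q*Qᴴ) B,
      Matrix.mul_assoc Q Qᴴ B, hP]
  rw [h3]
end

section
/- Let B ∈ ℂ^{L×L} be Hermitian positive semidefinite, let ρ ≥ 0 be real, and let N ≤ L. Then: (a) for every Q ∈ ℂ^{L×N} with Q* Q = I_N, det(I_N + ρ · Q* B Q) ≤ Π_{i=1}^{N} (1 + ρ · λ_i(B)), where λ_i(B) is the i-th largest eigenvalue of B; and (b) there exists Q ∈ ℂ^{L×N} with Q* Q = I_N attaining equality, namely Q whose columns are orthonormal eigenvectors of B associated with its N largest eigenvalues. Hence max over semi-unitary Q of det(I_N + ρ Q* B Q) equals Π_{i=1}^{N} (1 + ρ λ_i(B)). -/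
open Matrix
open scoped ComplexOrder

section Auxiliary

open Finset Function Equiv

private theorem cb_sum_perm {R : Type*} [CommRing R] {n : ℕ} (M N : Matrix (Fin n) (Fin n) R) :
    ∑ τ : Perm (Fin n), ∑ σ : Perm (Fin n),
      ((Equiv.Perm.sign σ : ℤ) : R) * ∏ i, M (σ i) (τ i) * N (τ i) i = det M * det N := by
  rw [← det_mul]
  refine Eq.symm ?_
  calc det (M * N) = ∑ p : Fin n → Fin n, ∑ σ : Perm (Fin n),
        ((Equiv.Perm.sign σ : ℤ) : R) * ∏ i, M (σ i) (p i) * N (p i) i := by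
        simp only [det_apply', mul_apply, Finset.prod_univ_sum, Finset.mul_sum,
          Fintype.piFinset_univ]
        rw [Finset.sum_comm]
    _ = ∑ p ∈ Finset.univ.filter (fun p : Fin n → Fin n => Bijective p), ∑ σ : Perm (Fin n),
        ((Equiv.Perm.sign σ : ℤ) : R) * ∏ i, M (σ i) (p i) * N (p i) i := by
        refine (Finset.sum_subset (Finset.filter_subset _ _) fun f _ hbij ↦
          Matrix.det_mul_aux ?_).symm
        simpa only [true_and, mem_filter, mem_univ] using hbij
    _ = ∑ τ : Perm (Fin n), ∑ σ : Perm (Fin n),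
        ((Equiv.Perm.sign σ : ℤ) : R) * ∏ i, M (σ i) (τ i) * N (τ i) i :=
      Finset.sum_bij (fun p h ↦ Equiv.ofBijective p (Finset.mem_filter.1 h).2)
        (fun _ _ ↦ Finset.mem_univ _)
        (fun _ _ _ _ h ↦ by injection h)
        (fun b _ ↦ ⟨b, Finset.mem_filter.2 ⟨Finset.mem_univ _, b.bijective⟩,
          Equiv.coe_fn_injective rfl⟩) fun _ _ ↦ rfl

private theorem cb_aux {R : Type*} [CommRing R] {N L : ℕ}
    {A : Matrix (Fin N) (Fin L) R} {B : Matrix (Fin L) (Fin N) R} {p : Fin N → Fin L}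
    (H : ¬Function.Injective p) :
    (∑ σ : Perm (Fin N), ((Equiv.Perm.sign σ : ℤ) : R) * ∏ x, A (σ x) (p x) * B (p x) x) = 0 := by
  obtain ⟨i, j, hpij, hij⟩ : ∃ i j, p i = p j ∧ i ≠ j := by
    rw [Function.Injective] at H
    push_neg at H
    obtain ⟨i, j, h1, h2⟩ := H
    exact ⟨i, j, h1, h2⟩
  exact Finset.sum_involution (fun σ _ => σ * Equiv.swap i j)
    (fun σ _ => by
      have : (∏ x, A (σ x) (p x)) = ∏ x, A ((σ * Equiv.swap i j) x) (p x) :=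
        Fintype.prod_equiv (Equiv.swap i j) _ _ (by simp [Equiv.apply_swap_eq_self hpij])
      simp [this, Equiv.Perm.sign_swap hij, -Equiv.Perm.sign_swap', Finset.prod_mul_distrib])
    (fun σ _ _ => (not_congr Equiv.mul_swap_eq_iff).mpr hij) (fun _ _ => Finset.mem_univ _)
    fun σ _ => Equiv.mul_swap_involutive i j σ

/-- **The Cauchy–Binet formula** for a product of an `N × L` and an `L × N` matrix. -/
private theorem cauchyBinet {R : Type*} [CommRing R] {N L : ℕ}
    (A : Matrix (Fin N) (Fin L) R) (B : Matrix (Fin L) (Fin N) R) :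
    det (A * B) = ∑ f ∈ Finset.univ.filter (fun f : Fin N → Fin L => StrictMono f),
      det (A.submatrix id f) * det (B.submatrix f id) := by
  have step1 : det (A * B) = ∑ p : Fin N → Fin L, ∑ σ : Perm (Fin N),
      ((Equiv.Perm.sign σ : ℤ) : R) * ∏ i, A (σ i) (p i) * B (p i) i := by
    simp only [det_apply', mul_apply, Finset.prod_univ_sum, Finset.mul_sum,
      Fintype.piFinset_univ]
    rw [Finset.sum_comm]
  have step2 : det (A * B) = ∑ p ∈ Finset.univ.filter (fun p : Fin N → Fin L => Injective p),
      ∑ σ : Perm (Fin N), ((Equiv.Perm.sign σ : ℤ) : R) * ∏ i, A (σ i) (p i) * B (p i) i := by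
    rw [step1]
    refine (Finset.sum_subset (Finset.filter_subset _ _) fun f _ hinj ↦ cb_aux ?_).symm
    simpa only [true_and, mem_filter, mem_univ] using hinj
  have step3 : ∑ x ∈ (Finset.univ.filter (fun f : Fin N → Fin L => StrictMono f)) ×ˢ
        (Finset.univ : Finset (Perm (Fin N))),
      ∑ σ : Perm (Fin N), ((Equiv.Perm.sign σ : ℤ) : R) *
        ∏ i, A (σ i) (x.1 (x.2 i)) * B (x.1 (x.2 i)) i
      = ∑ p ∈ Finset.univ.filter (fun p : Fin N → Fin L => Injective p),
      ∑ σ : Perm (Fin N), ((Equiv.Perm.sign σ : ℤ) : R) * ∏ i, A (σ i) (p i) * B (p i) i := by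
    refine Finset.sum_bij (fun x _ => x.1 ∘ x.2) ?_ ?_ ?_ ?_
    · rintro ⟨f, τ⟩ hm
      simp only [Finset.mem_product, mem_filter, mem_univ, true_and] at hm ⊢
      exact hm.1.injective.comp τ.injective
    · rintro ⟨f, τ⟩ hm ⟨f', τ'⟩ hm' h
      simp only [Finset.mem_product, mem_filter, mem_univ, true_and] at hm hm'
      have h' : f ∘ ⇑τ = f' ∘ ⇑τ' := h
      have hr : Set.range f = Set.range f' := by
        have e1 : Set.range (f ∘ τ) = Set.range f := by
          rw [Set.range_comp, τ.surjective.range_eq, Set.image_univ]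
        have e2 : Set.range (f' ∘ τ') = Set.range f' := by
          rw [Set.range_comp, τ'.surjective.range_eq, Set.image_univ]
        rw [← e1, ← e2, h']
      haveI := Finite.to_wellFoundedLT (α := Fin N)
      have hf : f = f' := (StrictMono.range_inj hm.1 hm'.1).mp hr
      subst hf
      have : τ = τ' :=
        Equiv.coe_fn_injective (funext fun i => hm.1.injective (congrFun h' i))
      simp [this]
    · intro p hp
      simp only [mem_filter, mem_univ, true_and] at hp
      set S : Finset (Fin L) := Finset.image p Finset.univ with hS
      have hcard : S.card = N := by
        rw [hS, Finset.card_image_of_injective _ hp, Finset.card_univ, Fintype.card_fin]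
      set f : Fin N → Fin L := fun i => S.orderEmbOfFin hcard i with hf
      have hfmono : StrictMono f := (S.orderEmbOfFin hcard).strictMono
      set u : Fin N → Fin N := fun i =>
        (S.orderIsoOfFin hcard).symm ⟨p i, Finset.mem_image_of_mem _ (Finset.mem_univ i)⟩
        with hu
      have hfu : ∀ i, f (u i) = p i := by
        intro i
        have : f (u i) = ((S.orderIsoOfFin hcard)
            ((S.orderIsoOfFin hcard).symm
              ⟨p i, Finset.mem_image_of_mem _ (Finset.mem_univ i)⟩) : Fin L) := by
          rw [OrderIso.apply_symm_apply]
          simp [hf, hu, ← Finset.coe_orderIsoOfFin_apply]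
        rw [this, OrderIso.apply_symm_apply]
      have huinj : Injective u := by
        intro a b hab
        apply hp
        rw [← hfu a, ← hfu b, hab]
      refine ⟨⟨f, Equiv.ofBijective u (Finite.injective_iff_bijective.mp huinj)⟩, ?_, ?_⟩
      · simp only [Finset.mem_product, mem_filter, mem_univ, true_and]
        exact ⟨hfmono, trivial⟩
      · funext i
        exact hfu i
    · intro a ha
      rfl
  rw [step2, ← step3, Finset.sum_product]
  refine Finset.sum_congr rfl fun f hf => ?_
  have := cb_sum_perm (A.submatrix id f) (B.submatrix f id)
  simp only [submatrix_apply, id_eq] at this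
  rw [← this]

private theorem fin_strictMono_le {N L : ℕ} {f : Fin N → Fin L} (hf : StrictMono f)
    (i : Fin N) : (i : ℕ) ≤ (f i : ℕ) := by
  have key : ∀ n : ℕ, ∀ i : Fin N, (i : ℕ) = n → n ≤ (f i : ℕ) := by
    intro n
    induction n with
    | zero => intro i _; exact Nat.zero_le _
    | succ n ih =>
      intro i hi
      have hn : n < N := by omega
      set j : Fin N := ⟨n, hn⟩
      have hji : j < i := by simp [Fin.lt_def, j, hi]
      have h1 : (f j : ℕ) < (f i : ℕ) := hf hji
      have h2 : n ≤ (f j : ℕ) := ih j rfl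
      omega
  exact key _ i rfl

/-- For an antitone nonnegative function and an injective selection, the product is at most
the product over the first indices. -/
private theorem prod_le_prod_head {L N : ℕ} (hN : N ≤ L) (φ : Fin L → ℝ)
    (hmono : Antitone φ) (hpos : ∀ k, 0 ≤ φ k)
    (g : Fin N → Fin L) (hg : Function.Injective g) :
    ∏ i : Fin N, φ (g i) ≤ ∏ i : Fin N, φ (Fin.castLE hN i) := by
  set T : Finset (Fin L) := Finset.image g Finset.univ with hT
  have hcard : T.card = N := by
    rw [hT, Finset.card_image_of_injective _ hg, Finset.card_univ, Fintype.card_fin]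
  set t : Fin N → Fin L := fun i => T.orderEmbOfFin hcard i with ht
  have htinj : Function.Injective t := (T.orderEmbOfFin hcard).injective
  have h1 : ∏ i : Fin N, φ (g i) = ∏ i : Fin N, φ (t i) := by
    have e1 : ∏ x ∈ T, φ x = ∏ i : Fin N, φ (g i) := by
      rw [hT, Finset.prod_image (fun a _ b _ h => hg h)]
    have himg : Finset.image t Finset.univ = T := by
      apply Finset.coe_injective
      rw [Finset.coe_image, Finset.coe_univ, Set.image_univ]
      exact Finset.range_orderEmbOfFin T hcard
    have e2 : ∏ x ∈ T, φ x = ∏ i : Fin N, φ (t i) := by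
      rw [← himg, Finset.prod_image (fun a _ b _ h => htinj h)]
    rw [← e1, e2]
  rw [h1]
  refine Finset.prod_le_prod (fun i _ => hpos _) (fun i _ => ?_)
  refine hmono ?_
  rw [Fin.le_def]
  exact le_trans (by simp) (fin_strictMono_le (T.orderEmbOfFin hcard).strictMono i)

end Auxiliary

/-- The eigenvalues of a Hermitian matrix listed in decreasing order. -/
noncomputable def eigDesc {n : ℕ} {B : Matrix (Fin n) (Fin n) ℂ}
    (hB : B.IsHermitian) : Fin n → ℝ :=
  fun i => hB.eigenvalues (Tuple.sort hB.eigenvalues i.rev)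

/-- **core log-det maximization, eq. (26).** For Hermitian positive
semidefinite `B`, `ρ ≥ 0` and `N ≤ L`: (a) every semi-unitary `Q` satisfies
`det(I + ρ Qᴴ B Q) ≤ ∏_{i<N} (1 + ρ λ_i(B))`, and (b) some semi-unitary `Q` (dominant
eigenvectors of `B`) attains equality; hence the maximum equals the product. -/
theorem logdet_maximization {L N : ℕ} (hN : N ≤ L)
    (B : Matrix (Fin L) (Fin L) ℂ) (hB : B.PosSemidef)
    (ρ : ℝ) (hρ : 0 ≤ ρ) :
    (∀ Q : Matrix (Fin L) (Fin N) ℂ, Qᴴ * Q = 1 →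
      (Matrix.det (1 + (ρ : ℂ) • (Qᴴ * B * Q))).re ≤
        ∏ i : Fin N, (1 + ρ * eigDesc hB.isHermitian (Fin.castLE hN i))) ∧
    (∃ Q : Matrix (Fin L) (Fin N) ℂ, Qᴴ * Q = 1 ∧
      (Matrix.det (1 + (ρ : ℂ) • (Qᴴ * B * Q))).re =
        ∏ i : Fin N, (1 + ρ * eigDesc hB.isHermitian (Fin.castLE hN i))) := by
  classical
  simp only [eigDesc]
  set lam := hB.isHermitian.eigenvalues with hlam
  set V : Matrix (Fin L) (Fin L) ℂ :=
    (hB.isHermitian.eigenvectorUnitary : Matrix (Fin L) (Fin L) ℂ) with hV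
  have hVmem := (hB.isHermitian.eigenvectorUnitary).2
  have hV1 : Vᴴ * V = 1 := by
    rw [← Matrix.star_eq_conjTranspose]
    exact (Unitary.mem_iff.mp hVmem).1
  have hV2 : V * Vᴴ = 1 := by
    rw [← Matrix.star_eq_conjTranspose]
    exact (Unitary.mem_iff.mp hVmem).2
  have hD : Vᴴ * B * V = Matrix.diagonal (fun k => (lam k : ℂ)) := by
    rw [← Matrix.star_eq_conjTranspose]
    exact (Unitary.conjStarAlgAut_star_apply (S := ℂ) _ B).symm.trans
      hB.isHermitian.conjStarAlgAut_star_eigenvectorUnitary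
  have hspec : B = V * Matrix.diagonal (fun k => (lam k : ℂ)) * Vᴴ := by
    rw [← Matrix.star_eq_conjTranspose]
    exact hB.isHermitian.spectral_theorem
  -- the key product bound over injective selections
  have hbound : ∀ g : Fin N → Fin L, Function.Injective g →
      ∏ i : Fin N, (1 + ρ * lam (g i)) ≤
        ∏ i : Fin N, (1 + ρ * lam (Tuple.sort lam (Fin.castLE hN i).rev)) := by
    intro g hg
    set φ : Fin L → ℝ := fun k => 1 + ρ * lam (Tuple.sort lam k.rev) with hφ
    have hmono : Antitone φ := by
      intro a b hab
      have h1 : lam (Tuple.sort lam b.rev) ≤ lam (Tuple.sort lam a.rev) :=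
        Tuple.monotone_sort lam (Fin.rev_le_rev.mpr hab)
      exact add_le_add_right (mul_le_mul_of_nonneg_left h1 hρ) 1
    have hpos : ∀ k, 0 ≤ φ k := fun k =>
      add_nonneg zero_le_one (mul_nonneg hρ (hB.eigenvalues_nonneg _))
    set h : Fin N → Fin L := fun i => ((Tuple.sort lam)⁻¹ (g i)).rev with hh
    have hinj : Function.Injective h :=
      Fin.rev_injective.comp ((Tuple.sort lam)⁻¹.injective.comp hg)
    have heq : ∀ i, φ (h i) = 1 + ρ * lam (g i) := by
      intro i
      simp [hφ, hh, Fin.rev_rev, Equiv.Perm.inv_def, Equiv.apply_symm_apply]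
    calc ∏ i : Fin N, (1 + ρ * lam (g i)) = ∏ i : Fin N, φ (h i) :=
          Finset.prod_congr rfl fun i _ => (heq i).symm
      _ ≤ ∏ i : Fin N, φ (Fin.castLE hN i) := prod_le_prod_head hN φ hmono hpos h hinj
      _ = ∏ i : Fin N, (1 + ρ * lam (Tuple.sort lam (Fin.castLE hN i).rev)) := rfl
  constructor
  · -- part (a): the upper bound
    intro Q hQ
    set P : Matrix (Fin L) (Fin N) ℂ := Vᴴ * Q with hPdef
    have hPH : Pᴴ = Qᴴ * V := by
      rw [hPdef, Matrix.conjTranspose_mul, Matrix.conjTranspose_conjTranspose]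
    have hQVVQ : Qᴴ * (V * (Vᴴ * Q)) = 1 := by
      rw [← Matrix.mul_assoc V, hV2, Matrix.one_mul, hQ]
    have hP1 : Pᴴ * P = 1 := by
      rw [hPH, hPdef, Matrix.mul_assoc, hQVVQ]
    set e : Fin L → ℂ := fun k => ((1 + ρ * lam k : ℝ) : ℂ) with he
    set E : Matrix (Fin L) (Fin L) ℂ := Matrix.diagonal e with hE
    have hEsplit : E = 1 + (ρ : ℂ) • Matrix.diagonal (fun k => (lam k : ℂ)) := by
      ext i j
      by_cases h : i = j <;>
        simp [hE, he, h, Matrix.diagonal_apply, Matrix.one_apply] <;> push_cast <;> ring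
    have hkey : 1 + (ρ : ℂ) • (Qᴴ * B * Q) = Pᴴ * E * P := by
      rw [hPH, hPdef, hEsplit, hspec]
      simp only [Matrix.mul_add, Matrix.add_mul, Matrix.mul_one, Matrix.one_mul,
        Matrix.mul_smul, Matrix.smul_mul, Matrix.mul_assoc]
      rw [hQVVQ]
    have hCB : det (Pᴴ * E * P) = ∑ f ∈ Finset.univ.filter
        (fun f : Fin N → Fin L => StrictMono f),
        det ((Pᴴ * E).submatrix id f) * det (P.submatrix f id) := by
      rw [Matrix.mul_assoc, ← cauchyBinet (Pᴴ * E) P]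
      rw [Matrix.mul_assoc]
    have hterm : ∀ f : Fin N → Fin L,
        det ((Pᴴ * E).submatrix id f) * det (P.submatrix f id)
          = ((Complex.normSq (det (P.submatrix f id)) * ∏ j, (1 + ρ * lam (f j)) : ℝ) : ℂ) := by
      intro f
      have hsub : (Pᴴ * E).submatrix id f
          = (P.submatrix f id)ᴴ * Matrix.diagonal (fun j => e (f j)) := by
        ext i j
        simp [hE, Matrix.mul_diagonal, Matrix.submatrix_apply, Matrix.conjTranspose_apply]
      rw [hsub, Matrix.det_mul, Matrix.det_conjTranspose, Matrix.det_diagonal]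
      have : ∏ j, e (f j) = ((∏ j, (1 + ρ * lam (f j)) : ℝ) : ℂ) := by
        rw [Complex.ofReal_prod]
      rw [this]
      have h2 : det (P.submatrix f id) * star (det (P.submatrix f id))
          = ((Complex.normSq (det (P.submatrix f id)) : ℝ) : ℂ) := by
        rw [Complex.star_def, Complex.mul_conj]
      rw [Complex.ofReal_mul, ← h2]
      ring
    have hW : ∑ f ∈ Finset.univ.filter (fun f : Fin N → Fin L => StrictMono f),
        Complex.normSq (det (P.submatrix f id)) = 1 := by
      have h1 := cauchyBinet Pᴴ P
      rw [hP1, Matrix.det_one] at h1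
      have h3 : ∀ f : Fin N → Fin L, det (Pᴴ.submatrix id f) * det (P.submatrix f id)
          = ((Complex.normSq (det (P.submatrix f id)) : ℝ) : ℂ) := by
        intro f
        have hx : Pᴴ.submatrix id f = (P.submatrix f id)ᴴ := by
          ext i j; simp [Matrix.conjTranspose_apply, Matrix.submatrix_apply]
        rw [hx, Matrix.det_conjTranspose, Complex.star_def, mul_comm, Complex.mul_conj]
      rw [Finset.sum_congr rfl (fun f _ => h3 f), ← Complex.ofReal_sum] at h1
      exact_mod_cast h1.symm
    rw [hkey, hCB, Finset.sum_congr rfl (fun f _ => hterm f), ← Complex.ofReal_sum,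
      Complex.ofReal_re]
    calc ∑ f ∈ Finset.univ.filter (fun f : Fin N → Fin L => StrictMono f),
          Complex.normSq (det (P.submatrix f id)) * ∏ j, (1 + ρ * lam (f j))
        ≤ ∑ f ∈ Finset.univ.filter (fun f : Fin N → Fin L => StrictMono f),
          Complex.normSq (det (P.submatrix f id)) *
            ∏ i : Fin N, (1 + ρ * lam (Tuple.sort lam (Fin.castLE hN i).rev)) := by
          refine Finset.sum_le_sum fun f hf => ?_
          exact mul_le_mul_of_nonneg_left
            (hbound f (Finset.mem_filter.mp hf).2.injective) (Complex.normSq_nonneg _)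
      _ = ∏ i : Fin N, (1 + ρ * lam (Tuple.sort lam (Fin.castLE hN i).rev)) := by
          rw [← Finset.sum_mul, hW, one_mul]
  · -- part (b): the maximizer
    set c : Fin N → Fin L := fun i => Tuple.sort lam ((Fin.castLE hN i).rev) with hc
    have hcinj : Function.Injective c :=
      (Tuple.sort lam).injective.comp (Fin.rev_injective.comp (Fin.castLE_injective hN))
    set Q : Matrix (Fin L) (Fin N) ℂ := V.submatrix id c with hQ
    have hQH : Qᴴ = Vᴴ.submatrix c id := by
      ext i j; simp [hQ, Matrix.conjTranspose_apply, Matrix.submatrix_apply]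
    have hQ1 : Qᴴ * Q = 1 := by
      rw [hQH, hQ, ← Matrix.submatrix_mul Vᴴ V c id c Function.bijective_id, hV1,
        Matrix.submatrix_one c hcinj]
    have hQ2 : Qᴴ * B * Q = Matrix.diagonal (fun i => (lam (c i) : ℂ)) := by
      rw [hQH, hQ]
      have e1 : Vᴴ.submatrix c id * B = (Vᴴ * B).submatrix c id := by
        rw [Matrix.submatrix_mul Vᴴ B c id id Function.bijective_id, Matrix.submatrix_id_id]
      rw [e1, ← Matrix.submatrix_mul (Vᴴ * B) V c id c Function.bijective_id, hD,
        Matrix.submatrix_diagonal _ c hcinj]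
      rfl
    have hdet : (1 : Matrix (Fin N) (Fin N) ℂ) + (ρ : ℂ) • (Qᴴ * B * Q)
        = Matrix.diagonal (fun i => ((1 + ρ * lam (c i) : ℝ) : ℂ)) := by
      rw [hQ2]
      ext i j
      by_cases h : i = j <;>
        simp [h, Matrix.diagonal_apply, Matrix.one_apply] <;> push_cast <;> ring
    refine ⟨Q, hQ1, ?_⟩
    rw [hdet, Matrix.det_diagonal, ← Complex.ofReal_prod, Complex.ofReal_re]
end
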